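/- Every symmetric matrix of rank at most 2 over ℂ is of the form μ + μᵀ for some matrix μ of rank at most 1, i.e., the map μ ↦ μ + μᵀ from rank-≤1 n×n matrices surjects onto symmetric matrices of rank ≤ 2. -/

import Mathlib

open Matrix

private lemma exists_sq_eq (c : ℂ) : ∃ s : ℂ, s * s = c := by
  obtain ⟨z, hz⟩ := IsAlgClosed.exists_pow_nat_eq c (n := 2) (by norm_num)
  exact ⟨z, by rw [← sq]; exact hz⟩

/-- Solve the 2×2 symmetric decomposition at the level of scalars. -/
private lemma solve_pair (α β δ : ℂ) :
    ∃ p1 p2 q1 q2 : ℂ, α = 2 * (p1 * q1) ∧ β = p1 * q2 + p2 * q1 ∧ δ = 2 * (p2 * q2) := by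
  by_cases hα : α = 0
  · by_cases hδ : δ = 0
    · exact ⟨1, 0, 0, β, by simp [hα], by ring, by simp [hδ]⟩
    · refine ⟨2 * β / δ, 1, 0, δ / 2, by simp [hα], ?_, by field_simp⟩
      field_simp; simp
  · obtain ⟨s, hs⟩ := exists_sq_eq (β * β - α * δ)
    refine ⟨1, (β + s) / α, α / 2, (β - s) / 2, by ring, by field_simp; ring, ?_⟩
    field_simp
    linear_combination hs

theorem symm_rank_le_two_eq_mu_add_mu_transpose {n : ℕ}
    (S : Matrix (Fin n) (Fin n) ℂ) (hsymm : S.IsSymm) (hrank : S.rank ≤ 2) :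
    ∃ v w : Fin n → ℂ, S = Matrix.vecMulVec v w + (Matrix.vecMulVec v w)ᵀ := by
  classical
  have hsym : ∀ i j, S j i = S i j := hsymm.apply
  -- Reduce to finding a symmetric "2-dimensional" representation of S.
  suffices h : ∃ (x y : Fin n → ℂ) (α β δ : ℂ), ∀ i j,
      S i j = α * (x i * x j) + β * (x i * y j + x j * y i) + δ * (y i * y j) by
    obtain ⟨x, y, α, β, δ, hS⟩ := h
    obtain ⟨p1, p2, q1, q2, h1, h2, h3⟩ := solve_pair α β δ
    refine ⟨fun i => p1 * x i + p2 * y i, fun i => q1 * x i + q2 * y i, ?_⟩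
    ext i j
    simp only [Matrix.add_apply, Matrix.vecMulVec_apply, Matrix.transpose_apply]
    rw [hS i j, h1, h2, h3]; ring
  -- The column space of S.
  set V := LinearMap.range S.mulVecLin with hV
  have hfin : Module.finrank ℂ V ≤ 2 := hrank
  have hcol : ∀ j, (fun i => S i j) ∈ V := by
    intro j
    refine ⟨Pi.single j 1, ?_⟩
    simp [Matrix.mulVecLin_apply]; rfl
  -- V is the span of the columns of S
  have hVspan : V = Submodule.span ℂ (Set.range fun j => (fun i => S i j)) := by
    rw [hV, Matrix.range_mulVecLin]
    rfl
  interval_cases hk : Module.finrank ℂ V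
  · -- rank 0 : S = 0
    have hbot : V = ⊥ := Submodule.finrank_eq_zero.mp hk
    refine ⟨0, 0, 0, 0, 0, fun i j => ?_⟩
    have := hcol j
    rw [hbot, Submodule.mem_bot] at this
    have : S i j = 0 := congrFun this i
    simp [this]
  · -- rank 1
    have b := Module.finBasisOfFinrankEq ℂ V hk
    set x : Fin n → ℂ := (b 0 : Fin n → ℂ) with hxdef
    have hx1 : ∀ m ∈ V, ∃ c : ℂ, m = c • x := by
      intro m hm
      have hmem : (⟨m, hm⟩ : V) ∈ Submodule.span ℂ (Set.range b) := by
        rw [b.span_eq]; trivial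
      rw [Set.range_unique] at hmem
      obtain ⟨c, hc⟩ := Submodule.mem_span_singleton.mp hmem
      exact ⟨c, (congrArg Subtype.val hc).symm⟩
    choose a ha using fun j => hx1 _ (hcol j)
    have haS : ∀ i j, S i j = a j * x i := by
      intro i j
      have := congrFun (ha j) i
      simpa using this
    -- x is nonzero
    have hxne : x ≠ 0 := by
      intro hx0
      exact b.ne_zero 0 (Subtype.coe_injective hx0)
    obtain ⟨i0, hi0⟩ := Function.ne_iff.mp hxne
    refine ⟨x, 0, a i0 / x i0, 0, 0, fun i j => ?_⟩
    have key : a j * x i0 = a i0 * x j := by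
      rw [← haS i0 j, ← hsym i0 j, haS j i0]
    rw [haS i j]
    have hi0' : (x i0 : ℂ) ≠ 0 := by simpa using hi0
    field_simp
    linear_combination x i * key
  · -- rank 2
    have b := Module.finBasisOfFinrankEq ℂ V hk
    set x : Fin n → ℂ := (b 0 : Fin n → ℂ) with hxdef
    set y : Fin n → ℂ := (b 1 : Fin n → ℂ) with hydef
    have hrange : Set.range b = {b 0, b 1} := by
      ext m; constructor
      · rintro ⟨i, rfl⟩
        fin_cases i
        · exact Set.mem_insert _ _
        · exact Set.mem_insert_of_mem _ rfl
      · rintro (rfl | rfl) <;> [exact ⟨0, rfl⟩; exact ⟨1, rfl⟩]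
    have hx2 : ∀ m ∈ V, ∃ c d : ℂ, m = c • x + d • y := by
      intro m hm
      have hmem : (⟨m, hm⟩ : V) ∈ Submodule.span ℂ (Set.range b) := by
        rw [b.span_eq]; trivial
      rw [hrange] at hmem
      obtain ⟨c, d, hcd⟩ := Submodule.mem_span_pair.mp hmem
      exact ⟨c, d, (congrArg Subtype.val hcd).symm⟩
    choose a c ha using fun j => hx2 _ (hcol j)
    have haS : ∀ i j, S i j = a j * x i + c j * y i := by
      intro i j
      have := congrFun (ha j) i
      simpa using this
    -- By symmetry, the columns also lie in span {a, c}
    have hcol2 : ∀ j, (fun i => S i j) ∈ Submodule.span ℂ ({a, c} : Set (Fin n → ℂ)) := by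
      intro j
      refine Submodule.mem_span_pair.mpr ⟨x j, y j, ?_⟩
      ext i
      simp only [Pi.add_apply, Pi.smul_apply, smul_eq_mul]
      rw [← hsym i j, haS j i]; ring
    have hVle : V ≤ Submodule.span ℂ ({a, c} : Set (Fin n → ℂ)) := by
      rw [hVspan]
      rw [Submodule.span_le]
      rintro m ⟨j, rfl⟩
      exact hcol2 j
    have hfinac : Module.finrank ℂ (Submodule.span ℂ ({a, c} : Set (Fin n → ℂ))) ≤ 2 := by
      refine le_trans (finrank_span_le_card _) ?_
      rw [Set.toFinset_insert, Set.toFinset_singleton]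
      exact (Finset.card_insert_le _ _).trans (by simp)
    have hVeq : V = Submodule.span ℂ ({a, c} : Set (Fin n → ℂ)) :=
      Submodule.eq_of_le_of_finrank_le hVle (by rw [hk]; exact hfinac)
    have haV : a ∈ V := by
      rw [hVeq]; exact Submodule.subset_span (by simp)
    have hcV : c ∈ V := by
      rw [hVeq]; exact Submodule.subset_span (by simp)
    obtain ⟨α', β', hab⟩ := hx2 a haV
    obtain ⟨γ', δ', hcd⟩ := hx2 c hcV
    refine ⟨x, y, α', (β' + γ') / 2, δ', fun i j => ?_⟩
    have e1 : S i j = a j * x i + c j * y i := haS i j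
    have e2 : S i j = a i * x j + c i * y j := by rw [← hsym i j]; exact haS j i
    have ea : ∀ k, a k = α' * x k + β' * y k := by
      intro k; have := congrFun hab k; simpa using this
    have ec : ∀ k, c k = γ' * x k + δ' * y k := by
      intro k; have := congrFun hcd k; simpa using this
    have : 2 * S i j = S i j + S i j := by ring
    have hsum : 2 * S i j = (a j * x i + c j * y i) + (a i * x j + c i * y j) := by
      rw [this]; nth_rewrite 1 [e1]; rw [e2]
    rw [ea i, ea j, ec i, ec j] at hsum
    field_simp
    linear_combination hsum
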